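/- Strong apartness is the complement of strong bisimilarity: for all states p, q, p #_s q if and only if it is not the case that p ~_s q. -/

import Mathlib

variable {X A : Type*}

/-- `Q` is a strong apartness relation. -/
def IsSApartRel (step : A → X → X → Prop) (Q : X → X → Prop) : Prop :=
  (∀ p q, Q p q → Q q p) ∧
  ∀ (a : A) (p p' q : X), step a p p' → (∀ q', step a q q' → Q p' q') → Q p q

/-- `p` and `q` are strongly apart: every strong apartness relates them. -/
def SApart (step : A → X → X → Prop) (p q : X) : Prop :=
  ∀ Q : X → X → Prop, IsSApartRel step Q → Q p q

/-- `R` is a strong bisimulation. -/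
def IsSBisim (step : A → X → X → Prop) (R : X → X → Prop) : Prop :=
  (∀ p q, R p q → R q p) ∧
  ∀ (a : A) (p p' q : X), R p q → step a p p' → ∃ q', step a q q' ∧ R p' q'

/-- Strong bisimilarity. -/
def SBisim (step : A → X → X → Prop) (p q : X) : Prop :=
  ∃ R : X → X → Prop, IsSBisim step R ∧ R p q

theorem sApart_iff_not_sBisim (step : A → X → X → Prop) (p q : X) :
    SApart step p q ↔ ¬ SBisim step p q := by
  constructor
  · intro hap hbis
    -- the complement of bisimilarity is an apartness
    have hQ : IsSApartRel step (fun x y => ¬ SBisim step x y) := by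
      constructor
      · rintro x y hxy ⟨R, hR, hRyx⟩
        exact hxy ⟨R, hR, hR.1 _ _ hRyx⟩
      · rintro a x x' y hstep hall ⟨R, hR, hRxy⟩
        obtain ⟨y', hy', hR'⟩ := hR.2 a x x' y hRxy hstep
        exact hall y' hy' ⟨R, hR, hR'⟩
    exact hap _ hQ hbis
  · intro hnb Q hQ
    by_contra hQpq
    -- the complement of Q is a bisimulation
    apply hnb
    refine ⟨fun x y => ¬ Q x y, ⟨?_, ?_⟩, hQpq⟩
    · intro x y hxy hyx; exact hxy (hQ.1 _ _ hyx)
    · intro a x x' y hxy hstep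
      by_contra hno
      push_neg at hno
      exact hxy (hQ.2 a x x' y hstep fun q' hq' => hno q' hq')
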